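/- Let (Ω, 𝓕, μ) be a probability space with Ω standard Borel, let E and F be standard Borel spaces, let T : Ω → ℝ and X : Ω → E be measurable, let g : E → F be measurable, and set Θ = g ∘ X. Suppose there exists a Markov kernel κ from F to ℝ such that for (μ.map X)-almost every x ∈ E, the regular conditional distribution of T given X = x equals κ(g(x)). Then T and X are conditionally independent given the σ-algebra generated by Θ, i.e., CondIndepFun T X holds with conditioning σ-algebra comap Θ. -/

import Mathlib

open MeasureTheory ProbabilityTheory

/-- If the regular conditional distribution of `T` given `X` depends on `X` only through a
measurable functional `Θ = g ∘ X` (via a Markov kernel `κ` from the range of `g`), then `T`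
and `X` are conditionally independent given the σ-algebra generated by `Θ = g ∘ X`. -/
theorem condIndepFun_of_condDistrib_factors
    {Ω E F : Type*}
    [MeasurableSpace Ω] [StandardBorelSpace Ω] [Nonempty Ω]
    [MeasurableSpace E] [StandardBorelSpace E]
    [MeasurableSpace F] [StandardBorelSpace F]
    (μ : Measure Ω) [IsProbabilityMeasure μ]
    (T : Ω → ℝ) (X : Ω → E) (g : E → F)
    (hT : Measurable T) (hX : Measurable X) (hg : Measurable g)
    (hfac : ∃ κ : ProbabilityTheory.Kernel F ℝ, IsMarkovKernel κ ∧
      ∀ᵐ x ∂(μ.map X), condDistrib T X μ x = κ (g x)) :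
    CondIndepFun (MeasurableSpace.comap (g ∘ X) inferInstance)
      ((hg.comp hX).comap_le) T X μ := by
  obtain ⟨κ, hκ, hae⟩ := hfac
  have hΘX : MeasurableSpace.comap (g ∘ X) inferInstance ≤
      MeasurableSpace.comap X inferInstance := by
    rw [← MeasurableSpace.comap_comp]
    exact MeasurableSpace.comap_mono hg.comap_le
  have hΘΩ := hΘX.trans hX.comap_le
  rw [condIndepFun_iff_condExp_inter_preimage_eq_mul hT hX]
  intro s t hs ht
  -- φ := ω ↦ (κ (g (X ω)) s).toReal
  set φ : Ω → ℝ := fun ω => (κ (g (X ω)) s).toReal with hφdef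
  have hφ_meas : Measurable[MeasurableSpace.comap (g ∘ X) inferInstance] φ := by
    have : Measurable fun y : F => (κ y s).toReal :=
      (Kernel.measurable_coe κ hs).ennreal_toReal
    exact this.comp (comap_measurable (g ∘ X))
  have hφ_sm : StronglyMeasurable[MeasurableSpace.comap (g ∘ X) inferInstance] φ := hφ_meas.stronglyMeasurable
  have hφ_bdd : ∀ ω, |φ ω| ≤ 1 := by
    intro ω
    rw [abs_of_nonneg ENNReal.toReal_nonneg]
    have h1 : κ (g (X ω)) s ≤ 1 := (measure_mono (Set.subset_univ s)).trans_eq measure_univ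
    exact ENNReal.toReal_le_of_le_ofReal zero_le_one (by simpa using h1)
  have hφ_int : Integrable φ μ :=
    (integrable_const (1 : ℝ)).mono' ((hφ_meas.mono hΘΩ le_rfl).aestronglyMeasurable (μ := μ))
      (Filter.Eventually.of_forall hφ_bdd)
  -- E[1_{T ∈ s} | σ(X)] = φ a.e.
  have hA : (μ⟦T ⁻¹' s | MeasurableSpace.comap X inferInstance⟧) =ᵐ[μ] φ := by
    refine ((condDistrib_ae_eq_condExp hX hT hs).symm).trans ?_
    filter_upwards [ae_of_ae_map hX.aemeasurable hae] with ω hω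
    simp [hφdef, hω, Measure.real]
  set iA : Ω → ℝ := (T ⁻¹' s).indicator (fun _ => (1:ℝ)) with hiA
  set iB : Ω → ℝ := (X ⁻¹' t).indicator (fun _ => (1:ℝ)) with hiB
  have hiA_int : Integrable iA μ := (integrable_const _).indicator (hT hs)
  have hiB_int : Integrable iB μ := (integrable_const _).indicator (hX ht)
  have hiB_sm : StronglyMeasurable[MeasurableSpace.comap X inferInstance] iB :=
    (stronglyMeasurable_const.indicator ⟨t, ht, rfl⟩)
  -- E[1_{T∈s} | MeasurableSpace.comap (g ∘ X) inferInstance] = φ a.e.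
  have hAΘ : (μ⟦T ⁻¹' s | MeasurableSpace.comap (g ∘ X) inferInstance⟧) =ᵐ[μ] φ := by
    have h1 := (condExp_condExp_of_le hΘX hX.comap_le (μ := μ)
      (f := iA)).symm
    refine h1.trans ?_
    refine (condExp_congr_ae hA).trans ?_
    rw [condExp_of_stronglyMeasurable hΘΩ hφ_sm hφ_int]
  -- indicator of intersection = product
  have hprod : ((T ⁻¹' s ∩ X ⁻¹' t).indicator (fun _ => (1:ℝ))) = iB * iA := by
    ext ω
    by_cases h1 : ω ∈ T ⁻¹' s <;> by_cases h2 : ω ∈ X ⁻¹' t <;>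
      simp [hiA, hiB, Set.indicator_apply, h1, h2, Set.mem_inter_iff]
  have hBA_int : Integrable (iB * iA) μ := by
    rw [← hprod]; exact (integrable_const _).indicator ((hT hs).inter (hX ht))
  -- pull out iB at level comap X
  have step1 : (μ⟦T ⁻¹' s ∩ X ⁻¹' t | MeasurableSpace.comap X inferInstance⟧)
      =ᵐ[μ] iB * φ := by
    have := condExp_mul_of_stronglyMeasurable_left hiB_sm hBA_int hiA_int
    calc (μ⟦T ⁻¹' s ∩ X ⁻¹' t | MeasurableSpace.comap X inferInstance⟧)
        = μ[iB * iA | MeasurableSpace.comap X inferInstance] := by rw [hprod]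
      _ =ᵐ[μ] iB * μ[iA | MeasurableSpace.comap X inferInstance] := this
      _ =ᵐ[μ] iB * φ := by
          filter_upwards [hA] with ω hω
          simp [Pi.mul_apply, hω]
  have hφiB_int : Integrable (φ * iB) μ := by
    refine (integrable_const (1:ℝ)).mono'
      (((hφ_meas.mono hΘΩ le_rfl).stronglyMeasurable.mul
        (hiB_sm.mono hX.comap_le)).aestronglyMeasurable) ?_
    refine Filter.Eventually.of_forall fun ω => ?_
    rw [Pi.mul_apply, Real.norm_eq_abs, abs_mul]
    have h2 : |iB ω| ≤ 1 := by
      rw [hiB]; by_cases h : ω ∈ X ⁻¹' t <;> simp [Set.indicator_apply, h]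
    calc |φ ω| * |iB ω| ≤ 1 * 1 := mul_le_mul (hφ_bdd ω) h2 (abs_nonneg _) zero_le_one
      _ = 1 := one_mul 1
  -- tower + pull out φ at level mΘ
  have step2 : (μ⟦T ⁻¹' s ∩ X ⁻¹' t | MeasurableSpace.comap (g ∘ X) inferInstance⟧) =ᵐ[μ] φ * μ[iB | MeasurableSpace.comap (g ∘ X) inferInstance] := by
    have h1 := (condExp_condExp_of_le hΘX hX.comap_le (μ := μ)
      (f := ((T ⁻¹' s ∩ X ⁻¹' t).indicator (fun _ => (1:ℝ))))).symm
    refine h1.trans ?_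
    refine (condExp_congr_ae step1).trans ?_
    have : iB * φ =ᵐ[μ] φ * iB := by rw [mul_comm]
    refine (condExp_congr_ae this).trans ?_
    exact condExp_mul_of_stronglyMeasurable_left hφ_sm hφiB_int hiB_int
  refine step2.trans ?_
  filter_upwards [hAΘ] with ω hω
  rw [Pi.mul_apply, hω]
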